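/- A digraph whose cycle space has Z-rank at least 3 is required for having cycles but no isolated cycles: if G' has at least one directed cycle and no isolated cycle, then G' contains at least three Z-linearly independent elementary cycles, hence |E'| - |V'| + 1 ≥ 3. -/

import Mathlib

open Module

/-- A directed cycle of a digraph given by `tail`/`head` maps. -/
def IsCycle {V E : Type*} (tail head : E → V) {n : ℕ} (c : Fin (n + 1) → E) : Prop :=
  ∀ i, head (c i) = tail (c (i + 1))

/-- An elementary cycle: a directed cycle visiting each vertex it contains exactly once. -/
def IsElemCycle {V E : Type*} (tail head : E → V) {n : ℕ} (c : Fin (n + 1) → E) : Prop :=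
  IsCycle tail head c ∧ Function.Injective (fun i => tail (c i))

/-- `e` is an isolating arc of the elementary cycle `c`. -/
def IsolatingArc {V E : Type*} (tail head : E → V) {n : ℕ} (c : Fin (n + 1) → E)
    (e : E) : Prop :=
  e ∈ Set.range c ∧
    ∀ (m : ℕ) (c' : Fin (m + 1) → E), IsElemCycle tail head c' →
      (∀ i, ¬ (tail (c' i) = tail e ∧ head (c' i) = head e)) →
      Disjoint (Set.range c) (Set.range c')

/-- The 0/1 vector in `ℤ^E` of a cycle. -/
def cycVec {E : Type*} [Fintype E] [DecidableEq E] {n : ℕ} (c : Fin (n + 1) → E) : E → ℤ :=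
  fun e => ((Finset.univ.filter fun i => c i = e).card : ℤ)

/-- The underlying adjacency relation of the digraph. -/
def AdjRel {V E : Type*} (tail head : E → V) (u v : V) : Prop :=
  ∃ e, (tail e = u ∧ head e = v) ∨ (tail e = v ∧ head e = u)

section aux
variable {E : Type*} [Fintype E] [DecidableEq E] {n : ℕ} {c : Fin (n + 1) → E}

lemma cycVec_eq_one (hinj : Function.Injective c) (i : Fin (n+1)) : cycVec c (c i) = 1 := by
  unfold cycVec
  norm_cast
  rw [Finset.card_eq_one]
  exact ⟨i, by ext j; simp [hinj.eq_iff]⟩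

lemma cycVec_eq_zero {e : E} (he : e ∉ Set.range c) : cycVec c e = 0 := by
  unfold cycVec
  norm_cast
  rw [Finset.card_eq_zero, Finset.filter_eq_empty_iff]
  intro i _ h
  exact he ⟨i, h⟩

lemma cycVec_nonneg (e : E) : 0 ≤ cycVec c e := Int.natCast_nonneg _

lemma indep_of_coords {E R : Type*} [CommRing R] [LinearOrder R] [IsStrictOrderedRing R] {v₁ v₂ v₃ : E → R}
    {e₁ e₂ f g : E}
    (h1e1 : v₁ e₁ = 1) (h1e2 : v₁ e₂ = 0) (h1f : v₁ f = 1)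
    (h2e1 : v₂ e₁ = 0) (h2e2 : v₂ e₂ = 1) (h2f : v₂ f = 1)
    (h3f : v₃ f = 0) (h3g : v₃ g ≠ 0) (h3nn : ∀ x, 0 ≤ v₃ x) :
    LinearIndependent R ![v₁, v₂, v₃] := by
  rw [Fintype.linearIndependent_iff]
  intro a ha
  have hfun : ∀ x, a 0 * v₁ x + a 1 * v₂ x + a 2 * v₃ x = 0 := by
    intro x
    have := congrFun ha x
    simpa [Fin.sum_univ_three] using this
  have hf := hfun f
  have he1 := hfun e₁
  have he2 := hfun e₂
  rw [h1f, h2f, h3f] at hf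
  rw [h1e1, h2e1] at he1
  rw [h1e2, h2e2] at he2
  have hd : a 2 = 0 := by
    by_contra hd
    have hsum : a 2 * (v₃ e₁ + v₃ e₂) = 0 := by ring_nf; ring_nf at hf he1 he2; linarith
    have h0 : v₃ e₁ + v₃ e₂ = 0 := by
      rcases mul_eq_zero.mp hsum with h | h
      · exact absurd h hd
      · exact h
    have hv1 : v₃ e₁ = 0 := le_antisymm (by have := h3nn e₂; linarith) (h3nn e₁)
    have hv2 : v₃ e₂ = 0 := by linarith [h3nn e₂]
    have ha0 : a 0 = 0 := by rw [hv1] at he1; linarith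
    have ha1 : a 1 = 0 := by rw [hv2] at he2; linarith
    have := hfun g
    rw [ha0, ha1] at this
    simp only [zero_mul, zero_add] at this
    rcases mul_eq_zero.mp this with h | h
    · exact hd h
    · exact h3g h
  have ha0 : a 0 = 0 := by rw [hd] at he1; linarith
  have ha1 : a 1 = 0 := by rw [hd] at he2; linarith
  intro i
  fin_cases i <;> assumption

end aux

lemma IsElemCycle.inj {V E : Type*} {tail head : E → V} {n : ℕ} {c : Fin (n + 1) → E}
    (hc : IsElemCycle tail head c) : Function.Injective c := by
  intro i j h
  exact hc.2 (by simp only [h])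

open Fin.NatCast in
lemma range_subset_of_subset {V E : Type*} (tail head : E → V) {n m : ℕ}
    {c : Fin (n+1) → E} {c' : Fin (m+1) → E}
    (hc : IsElemCycle tail head c) (hc' : IsElemCycle tail head c')
    (hsub : Set.range c' ⊆ Set.range c) : Set.range c ⊆ Set.range c' := by
  have hφ : ∀ i : Fin (m+1), ∃ j : Fin (n+1), c j = c' i := fun i => hsub ⟨i, rfl⟩
  choose φ hφc using hφ
  have hsucc : ∀ i, φ (i + 1) = φ i + 1 := by
    intro i
    apply hc.2
    show tail (c (φ (i+1))) = tail (c (φ i + 1))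
    rw [hφc, ← hc'.1 i, ← hc.1 (φ i), hφc]
  have hkey : ∀ k : ℕ, ∃ j, φ j = φ 0 + (k : Fin (n+1)) := by
    intro k
    induction k with
    | zero => exact ⟨0, by simp⟩
    | succ k ih =>
      obtain ⟨j, hj⟩ := ih
      refine ⟨j + 1, ?_⟩
      rw [hsucc, hj]
      push_cast
      simp only [Nat.cast_succ, add_assoc]
  rintro _ ⟨y, rfl⟩
  obtain ⟨j, hj⟩ := hkey (y - φ 0).val
  rw [Fin.cast_val_eq_self, add_sub_cancel] at hj
  exact ⟨j, by rw [← hφc, hj]⟩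

section D
variable {V E : Type*} [Fintype V] [Fintype E] [DecidableEq V] [DecidableEq E]
variable (tail head : E → V)

noncomputable def Dmap : (E → ℚ) →ₗ[ℚ] (V → ℚ) where
  toFun x := fun v => ∑ e, x e * ((if head e = v then 1 else 0) - (if tail e = v then 1 else 0))
  map_add' x y := by
    funext v
    simp [add_mul, Finset.sum_add_distrib]
  map_smul' r x := by
    funext v
    simp [Finset.mul_sum, mul_assoc]

set_option linter.unusedSectionVars false in
lemma Dmap_apply (x : E → ℚ) (v : V) :
    Dmap tail head x v =
      ∑ e, x e * ((if head e = v then 1 else 0) - (if tail e = v then 1 else 0)) := rfl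

def chi (v : V) : V → ℚ := fun w => if w = v then 1 else 0

lemma Dmap_single (e : E) : Dmap tail head (fun e' => if e' = e then 1 else 0) =
    chi (head e) - chi (tail e) := by
  funext v
  rw [Pi.sub_apply, Dmap_apply]
  rw [Finset.sum_eq_single e]
  · simp [chi, eq_comm]
  · intro b _ hb; simp [hb]
  · simp

lemma chi_sub_mem_range (hconn : ∀ u v : V, Relation.ReflTransGen (AdjRel tail head) u v)
    (v₀ v : V) : chi v - chi v₀ ∈ LinearMap.range (Dmap tail head) := by
  have h := hconn v₀ v
  induction h with
  | refl => simp
  | tail _ hbc ih =>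
    rename_i b cc _
    obtain ⟨e, he⟩ := hbc
    have hstep : chi cc - chi b ∈ LinearMap.range (Dmap tail head) := by
      rcases he with ⟨ht, hh⟩ | ⟨ht, hh⟩
      · exact ⟨_, by rw [Dmap_single, ht, hh]⟩
      · rw [show chi cc - chi b = -(chi b - chi cc) by ring]
        exact Submodule.neg_mem _ ⟨_, by rw [Dmap_single, ht, hh]⟩
    have := Submodule.add_mem _ hstep ih
    rwa [sub_add_sub_cancel] at this

lemma card_le_finrank_range (hconn : ∀ u v : V, Relation.ReflTransGen (AdjRel tail head) u v)
    [Nonempty V] :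
    Fintype.card V ≤ finrank ℚ (LinearMap.range (Dmap tail head)) + 1 := by
  obtain ⟨v₀⟩ := ‹Nonempty V›
  set p := LinearMap.range (Dmap tail head)
  set q := Submodule.span ℚ {chi v₀}
  have htop : p ⊔ q = ⊤ := by
    rw [eq_top_iff]
    intro x _
    rw [Submodule.mem_sup]
    refine ⟨x - (∑ v, x v) • chi v₀, ?_, (∑ v, x v) • chi v₀,
      Submodule.smul_mem _ _ (Submodule.mem_span_singleton_self _), by ring⟩
    have hx : x - (∑ v, x v) • chi v₀ = ∑ v, x v • (chi v - chi v₀) := by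
      funext w
      simp only [Pi.sub_apply, Pi.smul_apply, smul_eq_mul, Finset.sum_apply, chi,
        mul_sub, Finset.sum_sub_distrib, mul_ite, mul_one, mul_zero]
      rw [Finset.sum_ite_eq Finset.univ w x]
      simp only [Finset.mem_univ, if_true]
      congr 1
      split <;> simp
    rw [hx]
    exact Submodule.sum_mem _ fun v _ => Submodule.smul_mem _ _ (chi_sub_mem_range tail head hconn v₀ v)
  have h1 : finrank ℚ q = 1 := by
    apply finrank_span_singleton
    intro h
    have := congrFun h v₀
    simp [chi] at this
  have h2 := Submodule.finrank_sup_add_finrank_inf_eq p q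
  have h3 : finrank ℚ (V → ℚ) = Fintype.card V := finrank_fintype_fun_eq_card ℚ
  rw [htop] at h2
  rw [finrank_top] at h2
  omega

lemma Dmap_cycVec {n : ℕ} {c : Fin (n+1) → E} (hc : IsCycle tail head c) :
    Dmap tail head (fun e => (cycVec c e : ℚ)) = 0 := by
  funext v
  rw [Dmap_apply]
  have hcv : ∀ e : E, ((cycVec c e : ℚ)) = ∑ i : Fin (n+1), if c i = e then (1:ℚ) else 0 := by
    intro e
    unfold cycVec
    rw [Finset.card_filter]
    push_cast
    rfl
  simp only [hcv, Finset.sum_mul]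
  rw [Finset.sum_comm]
  have hterm : ∀ i : Fin (n+1),
      (∑ e, (if c i = e then (1:ℚ) else 0) * ((if head e = v then 1 else 0) - (if tail e = v then 1 else 0)))
      = (if head (c i) = v then (1:ℚ) else 0) - (if tail (c i) = v then 1 else 0) := by
    intro i
    rw [Finset.sum_eq_single (c i)]
    · simp
    · intro b _ hb; simp [Ne.symm hb]
    · simp
  simp only [hterm]
  rw [Finset.sum_sub_distrib]
  have : ∑ i : Fin (n+1), (if head (c i) = v then (1:ℚ) else 0)
      = ∑ i : Fin (n+1), (if tail (c i) = v then (1:ℚ) else 0) := by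
    refine Fintype.sum_equiv (Equiv.addRight (1 : Fin (n+1))) _ _ ?_
    intro i
    simp only [Equiv.coe_addRight]
    rw [hc i]; congr
  rw [this, sub_self, Pi.zero_apply]

end D

/-- A finite connected digraph with at least one directed cycle and no isolated cycle
contains three ℤ-linearly independent elementary cycles; hence `|E| - |V| + 1 ≥ 3`. -/
theorem three_indep_cycles_of_no_isolated {V E : Type*} [Fintype V] [Fintype E]
    [DecidableEq E] [Nonempty V] (tail head : E → V)
    (hconn : ∀ u v : V, Relation.ReflTransGen (AdjRel tail head) u v)
    (hcyc : ∃ (n : ℕ) (c : Fin (n + 1) → E), IsElemCycle tail head c)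
    (hiso : ¬ ∃ (n : ℕ) (c : Fin (n + 1) → E),
      IsElemCycle tail head c ∧ ∃ e, IsolatingArc tail head c e) :
    (∃ (c₁ c₂ c₃ : Σ m : ℕ, Fin (m + 1) → E),
      IsElemCycle tail head c₁.2 ∧ IsElemCycle tail head c₂.2 ∧
      IsElemCycle tail head c₃.2 ∧
      LinearIndependent ℤ ![cycVec c₁.2, cycVec c₂.2, cycVec c₃.2]) ∧
    Fintype.card V + 3 ≤ Fintype.card E + 1 := by
  haveI := Classical.decEq V
  obtain ⟨n₁, c₁, hc₁⟩ := hcyc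
  have hni : ∀ (n : ℕ) (c : Fin (n+1) → E), IsElemCycle tail head c → ∀ e ∈ Set.range c,
      ∃ (m : ℕ) (c' : Fin (m+1) → E), IsElemCycle tail head c' ∧
        (∀ i, ¬ (tail (c' i) = tail e ∧ head (c' i) = head e)) ∧
        ¬ Disjoint (Set.range c) (Set.range c') := by
    intro n c hc e he
    by_contra hcon
    push_neg at hcon
    exact hiso ⟨n, c, hc, e, he, fun m c' hc' hpar => hcon m c' hc' (fun i h1 h2 => hpar i ⟨h1, h2⟩)⟩
  set e₁ := c₁ 0 with he₁def
  obtain ⟨n₂, c₂, hc₂, hpar₂, hmeet⟩ := hni n₁ c₁ hc₁ e₁ ⟨0, rfl⟩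
  have he₁c₂ : e₁ ∉ Set.range c₂ := by
    rintro ⟨i, hi⟩
    exact hpar₂ i ⟨by rw [hi], by rw [hi]⟩
  obtain ⟨f, hf₁, hf₂⟩ := Set.not_disjoint_iff.mp hmeet
  have he2ex : ∃ e₂, e₂ ∈ Set.range c₂ ∧ e₂ ∉ Set.range c₁ := by
    by_contra h
    push_neg at h
    exact he₁c₂ (range_subset_of_subset tail head hc₁ hc₂ h ⟨0, rfl⟩)
  obtain ⟨e₂, he₂c₂, he₂c₁⟩ := he2ex
  obtain ⟨n₃, c₃, hc₃, hpar₃, -⟩ := hni n₂ c₂ hc₂ f hf₂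
  have hfc₃ : f ∉ Set.range c₃ := by
    rintro ⟨i, hi⟩
    exact hpar₃ i ⟨by rw [hi], by rw [hi]⟩
  -- coordinate values
  obtain ⟨if₁, hif₁⟩ := hf₁
  obtain ⟨if₂, hif₂⟩ := hf₂
  obtain ⟨ie₂, hie₂⟩ := he₂c₂
  have h1e1 : cycVec c₁ e₁ = 1 := cycVec_eq_one hc₁.inj 0
  have h1e2 : cycVec c₁ e₂ = 0 := cycVec_eq_zero he₂c₁
  have h1f : cycVec c₁ f = 1 := hif₁ ▸ cycVec_eq_one hc₁.inj if₁
  have h2e1 : cycVec c₂ e₁ = 0 := cycVec_eq_zero he₁c₂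
  have h2e2 : cycVec c₂ e₂ = 1 := hie₂ ▸ cycVec_eq_one hc₂.inj ie₂
  have h2f : cycVec c₂ f = 1 := hif₂ ▸ cycVec_eq_one hc₂.inj if₂
  have h3f : cycVec c₃ f = 0 := cycVec_eq_zero hfc₃
  have h3g : cycVec c₃ (c₃ 0) ≠ 0 := by
    rw [cycVec_eq_one hc₃.inj 0]; exact one_ne_zero
  have hindZ : LinearIndependent ℤ ![cycVec c₁, cycVec c₂, cycVec c₃] :=
    indep_of_coords h1e1 h1e2 h1f h2e1 h2e2 h2f h3f h3g cycVec_nonneg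
  constructor
  · exact ⟨⟨n₁, c₁⟩, ⟨n₂, c₂⟩, ⟨n₃, c₃⟩, hc₁, hc₂, hc₃, hindZ⟩
  -- rank bound over ℚ
  set q1 : E → ℚ := fun e => (cycVec c₁ e : ℚ) with hq1
  set q2 : E → ℚ := fun e => (cycVec c₂ e : ℚ) with hq2
  set q3 : E → ℚ := fun e => (cycVec c₃ e : ℚ) with hq3
  have hindQ : LinearIndependent ℚ ![q1, q2, q3] := by
    apply indep_of_coords (e₁ := e₁) (e₂ := e₂) (f := f) (g := c₃ 0)
    · show ((cycVec c₁ e₁ : ℤ) : ℚ) = 1; exact_mod_cast h1e1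
    · show ((cycVec c₁ e₂ : ℤ) : ℚ) = 0; exact_mod_cast h1e2
    · show ((cycVec c₁ f : ℤ) : ℚ) = 1; exact_mod_cast h1f
    · show ((cycVec c₂ e₁ : ℤ) : ℚ) = 0; exact_mod_cast h2e1
    · show ((cycVec c₂ e₂ : ℤ) : ℚ) = 1; exact_mod_cast h2e2
    · show ((cycVec c₂ f : ℤ) : ℚ) = 1; exact_mod_cast h2f
    · show ((cycVec c₃ f : ℤ) : ℚ) = 0; exact_mod_cast h3f
    · show ((cycVec c₃ (c₃ 0) : ℤ) : ℚ) ≠ 0; exact_mod_cast h3g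
    · intro x; show (0:ℚ) ≤ ((cycVec c₃ x : ℤ) : ℚ); exact_mod_cast cycVec_nonneg x
  set D := Dmap tail head with hD
  have hker : ∀ i : Fin 3, ![q1, q2, q3] i ∈ LinearMap.ker D := by
    intro i
    fin_cases i
    · exact LinearMap.mem_ker.mpr (Dmap_cycVec tail head hc₁.1)
    · exact LinearMap.mem_ker.mpr (Dmap_cycVec tail head hc₂.1)
    · exact LinearMap.mem_ker.mpr (Dmap_cycVec tail head hc₃.1)
  set k : Fin 3 → LinearMap.ker D := fun i => ⟨![q1, q2, q3] i, hker i⟩ with hk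
  have hindk : LinearIndependent ℚ k := by
    apply LinearIndependent.of_comp (LinearMap.ker D).subtype
    have : (LinearMap.ker D).subtype ∘ k = ![q1, q2, q3] := by
      funext i; rfl
    rw [this]
    exact hindQ
  have h3le : 3 ≤ finrank ℚ (LinearMap.ker D) := by
    have := hindk.fintype_card_le_finrank
    simpa using this
  have hrn := LinearMap.finrank_range_add_finrank_ker D
  rw [finrank_fintype_fun_eq_card] at hrn
  have hcard := card_le_finrank_range tail head hconn
  rw [← hD] at hcard
  omega
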